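/- Let α be an n×n hermitian complex matrix with trace norm ‖α‖₁ = 1 and with no zero eigenvalues (α invertible). If φ is a hermitian matrix satisfying Tr[φβ] ≤ Tr[φα] = 1 for all hermitian β with ‖β‖₁ ≤ 1, then φ = P₊ − P₋, where P₊ and P₋ are the orthogonal projections onto the span of eigenvectors of α with positive and with negative eigenvalues respectively. In particular, the supporting functional of the trace-norm unit ball at such α is unique. -/

import Mathlib

open Matrix
open scoped ComplexOrder

noncomputable def traceNorm {ι : Type*} [Fintype ι] [DecidableEq ι]
    (A : Matrix ι ι ℂ) : ℝ :=
  (((Matrix.posSemidef_conjTranspose_mul_self A).1.eigenvectorUnitary.1 *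
      Matrix.diagonal (((↑) : ℝ → ℂ) ∘ (√·) ∘ (Matrix.posSemidef_conjTranspose_mul_self A).1.eigenvalues) *
      (star (Matrix.posSemidef_conjTranspose_mul_self A).1.eigenvectorUnitary : Matrix ι ι ℂ)).trace).re

noncomputable def mfun {ι : Type*} [Fintype ι] [DecidableEq ι] (g : ℝ → ℝ)
    (A : Matrix ι ι ℂ) : Matrix ι ι ℂ :=
  if hA : A.IsHermitian then
    (hA.eigenvectorUnitary : Matrix ι ι ℂ) *
      Matrix.diagonal (fun i => (g (hA.eigenvalues i) : ℂ)) *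
      (star hA.eigenvectorUnitary : Matrix ι ι ℂ)
  else 0

noncomputable def divDiff {ι : Type*} (g : ℝ → ℝ) (a : ι → ℝ) : Matrix ι ι ℝ :=
  Matrix.of fun i j =>
    if a i = a j then deriv g (a i) else (g (a i) - g (a j)) / (a i - a j)

noncomputable def Dop {ι : Type*} [Fintype ι] [DecidableEq ι] (g : ℝ → ℝ)
    {A : Matrix ι ι ℂ} (hA : A.IsHermitian) (B : Matrix ι ι ℂ) : Matrix ι ι ℂ :=
  (hA.eigenvectorUnitary : Matrix ι ι ℂ) *
    (((divDiff g hA.eigenvalues).map Complex.ofReal) ⊙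
      ((star hA.eigenvectorUnitary : Matrix ι ι ℂ) * B *
        (hA.eigenvectorUnitary : Matrix ι ι ℂ))) *
    (star hA.eigenvectorUnitary : Matrix ι ι ℂ)

noncomputable def relEnt {ι : Type*} [Fintype ι] [DecidableEq ι]
    (ρ σ : Matrix ι ι ℂ) : ℝ :=
  ((ρ * (mfun Real.log ρ - mfun Real.log σ)).trace).re

def ptrans {m n : Type*} (A : Matrix (m × n) (m × n) ℂ) : Matrix (m × n) (m × n) ℂ :=
  Matrix.of fun p q => A (p.1, q.2) (q.1, p.2)

/-- Orthogonal projection onto the span of eigenvectors of a hermitian matrix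
with positive eigenvalues. -/
noncomputable def posProj {ι : Type*} [Fintype ι] [DecidableEq ι]
    {α : Matrix ι ι ℂ} (hα : α.IsHermitian) : Matrix ι ι ℂ :=
  (hα.eigenvectorUnitary : Matrix ι ι ℂ) *
    Matrix.diagonal (fun i => if 0 < hα.eigenvalues i then (1 : ℂ) else 0) *
    (star hα.eigenvectorUnitary : Matrix ι ι ℂ)

/-- Orthogonal projection onto the span of eigenvectors of a hermitian matrix
with negative eigenvalues. -/
noncomputable def negProj {ι : Type*} [Fintype ι] [DecidableEq ι]
    {α : Matrix ι ι ℂ} (hα : α.IsHermitian) : Matrix ι ι ℂ :=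
  (hα.eigenvectorUnitary : Matrix ι ι ℂ) *
    Matrix.diagonal (fun i => if hα.eigenvalues i < 0 then (1 : ℂ) else 0) *
    (star hα.eigenvectorUnitary : Matrix ι ι ℂ)

section Helpers

variable {N : ℕ}

open scoped MatrixOrder in
lemma traceNorm_eq_of_sq (A X : Matrix (Fin N) (Fin N) ℂ) (hX : X.PosSemidef)
    (h : X ^ 2 = Aᴴ * A) : traceNorm A = X.trace.re := by
  unfold traceNorm
  have hP := Matrix.posSemidef_conjTranspose_mul_self A
  have e : (hP.1.eigenvectorUnitary.1 *
      Matrix.diagonal (((↑) : ℝ → ℂ) ∘ (√·) ∘ hP.1.eigenvalues) *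
      (star hP.1.eigenvectorUnitary : Matrix (Fin N) (Fin N) ℂ)) = X := by
    rw [← CFC.sqrt_sq X hX.nonneg, h, CFC.sqrt_eq_cfc, cfc_nnreal_eq_real _ (Aᴴ * A),
      hP.1.cfc_eq]
    simp only [IsHermitian.cfc, Unitary.conjStarAlgAut_apply]
    congr 2
    ext i j
    simp [diagonal_apply, Real.coe_toNNReal', max_eq_left (hP.eigenvalues_nonneg _)]
  rw [e]

lemma sum_two {f : Fin N → ℂ} {i j : Fin N} (hij : i ≠ j)
    (h : ∀ p, p ≠ i → p ≠ j → f p = 0) : ∑ p, f p = f i + f j := by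
  rw [← Finset.sum_pair hij]
  exact (Finset.sum_subset (Finset.subset_univ _) (fun x _ hx => by
    simp only [Finset.mem_insert, Finset.mem_singleton, not_or] at hx
    exact h x hx.1 hx.2)).symm

end Helpers
lemma rankOne_test {N : ℕ} (U : Matrix.unitaryGroup (Fin N) ℂ)
    (φ : Matrix (Fin N) (Fin N) ℂ)
    (hφsupp1 : ∀ β : Matrix (Fin N) (Fin N) ℂ, β.IsHermitian → traceNorm β ≤ 1 →
      ((φ * β).trace).re ≤ 1)
    (v : Fin N → ℂ) (hv : ∑ q, v q * star (v q) = 1) :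
    |(∑ p, ∑ q, ((star (U : Matrix (Fin N) (Fin N) ℂ) * φ * U) p q * (v q * star (v p)))).re| ≤ 1 := by
  set Um : Matrix (Fin N) (Fin N) ℂ := (U : Matrix (Fin N) (Fin N) ℂ) with hUm
  have hUU : star Um * Um = 1 := Unitary.coe_star_mul_self U
  set M : Matrix (Fin N) (Fin N) ℂ := Matrix.of fun p q => v p * star (v q) with hMdef
  have hM : M.IsHermitian := by
    ext p q
    simp [hMdef, Matrix.conjTranspose_apply, mul_comm]
  have hMpsd : M.PosSemidef := by
    exact Matrix.posSemidef_vecMulVec_self_star v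
  have htrM : M.trace = 1 := by
    simpa [Matrix.trace, Matrix.diag, hMdef] using hv
  set β : Matrix (Fin N) (Fin N) ℂ := Um * M * star Um with hβdef
  have hβH : β.IsHermitian := by
    unfold Matrix.IsHermitian
    simp [hβdef, Matrix.conjTranspose_mul, Matrix.star_eq_conjTranspose, hM.eq,
      Matrix.mul_assoc]
  have hβpsd : β.PosSemidef := by
    exact hMpsd.mul_mul_conjTranspose_same Um
  have hβsq : β ^ 2 = βᴴ * β := by rw [sq, hβH.eq]
  have htrβ : β.trace = 1 := by
    rw [hβdef, Matrix.trace_mul_cycle, hUU, Matrix.one_mul, htrM]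
  have hTN : traceNorm β = 1 := by
    rw [traceNorm_eq_of_sq β β hβpsd hβsq, htrβ]
    simp
  have key : (φ * β).trace =
      ∑ p, ∑ q, ((star Um * φ * Um) p q * (v q * star (v p))) := by
    have h1 : φ * β = (φ * Um * M) * star Um := by simp [hβdef, Matrix.mul_assoc]
    have h2 : star Um * (φ * Um * M) = (star Um * φ * Um) * M := by
      simp [Matrix.mul_assoc]
    rw [h1, Matrix.trace_mul_comm, h2]
    simp [Matrix.trace, Matrix.diag, Matrix.mul_apply, hMdef]
  have hTN' : traceNorm (-β) = 1 := by
    rw [traceNorm_eq_of_sq (-β) β hβpsd (by simpa using hβsq), htrβ]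
    simp
  have hle1 := hφsupp1 β hβH (le_of_eq hTN)
  have hle2 := hφsupp1 (-β) hβH.neg (le_of_eq hTN')
  rw [Matrix.mul_neg, Matrix.trace_neg, Complex.neg_re] at hle2
  rw [abs_le, ← key]
  constructor <;> linarith
set_option maxHeartbeats 1000000
theorem supporting_functional_of_traceNorm_ball_unique
    {N : ℕ} (α : Matrix (Fin N) (Fin N) ℂ) (hα : α.IsHermitian)
    (hnorm : traceNorm α = 1) (hinv : ∀ i, hα.eigenvalues i ≠ 0)
    (φ : Matrix (Fin N) (Fin N) ℂ) (hφ : φ.IsHermitian)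
    (hφα : ((φ * α).trace).re = 1)
    (hφsupp : ∀ β : Matrix (Fin N) (Fin N) ℂ, β.IsHermitian → traceNorm β ≤ 1 →
      ((φ * β).trace).re ≤ ((φ * α).trace).re) :
    φ = posProj hα - negProj hα := by
  classical
  set Um : Matrix (Fin N) (Fin N) ℂ :=
    (hα.eigenvectorUnitary : Matrix (Fin N) (Fin N) ℂ) with hUm
  have hUU : star Um * Um = 1 := Unitary.coe_star_mul_self _
  have hUU' : Um * star Um = 1 := Unitary.coe_mul_star_self _
  set ψ : Matrix (Fin N) (Fin N) ℂ := star Um * φ * Um with hψdef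
  have hψ : ψ.IsHermitian := by
    unfold Matrix.IsHermitian
    simp [hψdef, Matrix.conjTranspose_mul, Matrix.star_eq_conjTranspose, hφ.eq,
      Matrix.mul_assoc]
  set lam : Fin N → ℝ := hα.eigenvalues with hlam
  have hφsupp1 : ∀ β : Matrix (Fin N) (Fin N) ℂ, β.IsHermitian → traceNorm β ≤ 1 →
      ((φ * β).trace).re ≤ 1 := by
    intro β h1 h2
    rw [← hφα]; exact hφsupp β h1 h2
  -- diagonal bounds
  have hdiagbound : ∀ i, |(ψ i i).re| ≤ 1 := by
    intro i
    have h := rankOne_test hα.eigenvectorUnitary φ hφsupp1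
      (fun p => if p = i then 1 else 0) (by simp)
    simpa [apply_ite (star (R := ℂ)), mul_ite, ite_mul, Finset.sum_ite_eq',
      Finset.sum_ite_eq] using h
  -- trace identity
  have htr : ∑ i, lam i * (ψ i i).re = 1 := by
    have h1 : (φ * α).trace =
        (ψ * Matrix.diagonal (RCLike.ofReal ∘ lam)).trace := by
      conv_lhs => rw [hα.spectral_theorem, Unitary.conjStarAlgAut_apply]
      have e1 : φ * (Um * Matrix.diagonal (RCLike.ofReal ∘ lam) * star Um) =
          (φ * Um * Matrix.diagonal (RCLike.ofReal ∘ lam)) * star Um := by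
        simp [Matrix.mul_assoc]
      have e2 : star Um * (φ * Um * Matrix.diagonal (RCLike.ofReal ∘ lam)) =
          ψ * Matrix.diagonal (RCLike.ofReal ∘ lam) := by
        simp [hψdef, Matrix.mul_assoc]
      rw [e1, Matrix.trace_mul_comm, e2]
    have h2 : (ψ * Matrix.diagonal (RCLike.ofReal ∘ lam)).trace =
        ∑ i, ψ i i * (lam i : ℂ) := by
      simp [Matrix.trace, Matrix.diag, Matrix.mul_apply, Matrix.diagonal_apply,
        mul_ite, mul_zero, Finset.sum_ite_eq', RCLike.ofReal]
    rw [← hφα, h1, h2, Complex.re_sum]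
    congr 1; ext i
    simp [Complex.mul_re, mul_comm]
  -- hnorm gives sum of abs eigenvalues
  have habs : ∑ i, |lam i| = 1 := by
    have hXpsd : (Um * Matrix.diagonal (fun i => ((|lam i| : ℝ) : ℂ)) * star Um).PosSemidef := by
      have : (Matrix.diagonal (fun i => ((|lam i| : ℝ) : ℂ))).PosSemidef :=
        Matrix.PosSemidef.diagonal fun i => Complex.zero_le_real.2 (abs_nonneg _)
      simpa [Matrix.star_eq_conjTranspose] using this.mul_mul_conjTranspose_same Um
    have hXsq : (Um * Matrix.diagonal (fun i => ((|lam i| : ℝ) : ℂ)) * star Um) ^ 2 =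
        αᴴ * α := by
      rw [hα.eq]
      conv_rhs => rw [hα.spectral_theorem, Unitary.conjStarAlgAut_apply]
      rw [sq]
      have : ∀ D E : Matrix (Fin N) (Fin N) ℂ,
          (Um * D * star Um) * (Um * E * star Um) = Um * (D * E) * star Um := by
        intro D E
        calc (Um * D * star Um) * (Um * E * star Um)
            = Um * D * (star Um * Um) * E * star Um := by simp [Matrix.mul_assoc]
          _ = Um * (D * E) * star Um := by rw [hUU]; simp [Matrix.mul_assoc]
      rw [this, this]
      congr 2
      rw [Matrix.diagonal_mul_diagonal, Matrix.diagonal_mul_diagonal]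
      refine congrArg Matrix.diagonal (funext fun i => ?_)
      have hco : (RCLike.ofReal : ℝ → ℂ) = Complex.ofReal := rfl
      simp only [Function.comp_apply, hco]
      rw [← Complex.ofReal_mul, ← Complex.ofReal_mul, abs_mul_abs_self]
    have := traceNorm_eq_of_sq α _ hXpsd hXsq
    rw [hnorm] at this
    have htrX : (Um * Matrix.diagonal (fun i => ((|lam i| : ℝ) : ℂ)) * star Um).trace =
        ∑ i, ((|lam i| : ℝ) : ℂ) := by
      rw [Matrix.trace_mul_cycle, hUU, Matrix.one_mul, Matrix.trace_diagonal]
    rw [htrX] at this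
    have h3 : (∑ i, ((|lam i| : ℝ) : ℂ)).re = ∑ i, |lam i| := by
      rw [Complex.re_sum]; simp
    rw [h3] at this
    linarith
  -- termwise equality
  set sg : Fin N → ℝ := fun i => if 0 < lam i then 1 else -1 with hsg
  have hterm : ∀ i, lam i * (ψ i i).re = |lam i| := by
    have hle : ∀ i ∈ Finset.univ, lam i * (ψ i i).re ≤ |lam i| := by
      intro i _
      calc lam i * (ψ i i).re ≤ |lam i * (ψ i i).re| := le_abs_self _
        _ = |lam i| * |(ψ i i).re| := abs_mul _ _
        _ ≤ |lam i| * 1 := mul_le_mul_of_nonneg_left (hdiagbound i) (abs_nonneg _)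
        _ = |lam i| := mul_one _
    have := (Finset.sum_eq_sum_iff_of_le hle).1 (htr.trans habs.symm)
    exact fun i => this i (Finset.mem_univ i)
  have hre : ∀ i, (ψ i i).re = sg i := by
    intro i
    rcases lt_or_gt_of_ne (hinv i) with hneg | hpos
    · have h1 := hterm i
      rw [abs_of_neg hneg] at h1
      have : lam i * (ψ i i).re = lam i * (-1) := by linarith
      have := mul_left_cancel₀ (ne_of_lt hneg) this
      simp [hsg, not_lt.2 (le_of_lt hneg), this, asymm hneg]
    · have h1 := hterm i
      rw [abs_of_pos hpos] at h1
      have : lam i * (ψ i i).re = lam i * 1 := by linarith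
      have := mul_left_cancel₀ (ne_of_gt hpos) this
      simp [hsg, hpos, this]
  have hdiag : ∀ i, ψ i i = (sg i : ℂ) := by
    intro i
    have h1 : ((ψ i i).re : ℂ) = ψ i i := hψ.coe_re_apply_self i
    rw [← h1, hre]
  have hsg1 : ∀ i, sg i = 1 ∨ sg i = -1 := by
    intro i; by_cases h : 0 < lam i <;> simp [hsg, h]
  have hoff : ∀ i j, i ≠ j → ψ i j = 0 := by
    intro i j hij
    by_contra hne
    set ε : ℝ := ‖ψ i j‖ with hε
    have hεpos : 0 < ε := by
      rw [hε]; exact (norm_pos_iff.mpr hne)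
    set t : ℝ := min (1/2) (ε/4) with ht
    have ht0 : 0 < t := lt_min (by norm_num) (by linarith)
    have ht2 : t ≤ 1/2 := min_le_left _ _
    have ht3 : t ≤ ε/4 := min_le_right _ _
    set c : ℝ := Real.sqrt (1 - t^2) with hcdef
    have hc2 : c^2 = 1 - t^2 := Real.sq_sqrt (by nlinarith)
    have hcnn : 0 ≤ c := Real.sqrt_nonneg _
    have hcge : (1:ℝ)/2 ≤ c := by nlinarith
    set a : ℝ := sg i with ha
    set b : ℝ := sg j with hb
    have ha1 : a = 1 ∨ a = -1 := hsg1 i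
    have hb1 : b = 1 ∨ b = -1 := hsg1 j
    have ha2 : a^2 = 1 := by rcases ha1 with h|h <;> rw [h] <;> norm_num
    have hab : -1 ≤ a*b := by
      rcases ha1 with h|h <;> rcases hb1 with h'|h' <;> rw [h, h'] <;> norm_num
    set ω : ℂ := (a : ℂ) * (starRingEnd ℂ) (ψ i j) / (ε : ℂ) with hω
    have hεne : (ε:ℂ) ≠ 0 := by exact_mod_cast ne_of_gt hεpos
    have hconj : ψ i j * (starRingEnd ℂ) (ψ i j) = ((ε^2 : ℝ) : ℂ) := by
      rw [Complex.mul_conj, Complex.normSq_eq_norm_sq, hε]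
    have hψω : ψ i j * ω = ((a * ε : ℝ) : ℂ) := by
      rw [hω]
      rw [show ψ i j * ((a:ℂ) * (starRingEnd ℂ) (ψ i j) / (ε:ℂ)) =
        (a:ℂ) * (ψ i j * (starRingEnd ℂ) (ψ i j)) / (ε:ℂ) by ring, hconj]
      field_simp
      push_cast; ring
    have hωω : ω * star ω = 1 := by
      have hns : Complex.normSq ω = 1 := by
        rw [hω, Complex.normSq_div, Complex.normSq_mul, Complex.normSq_conj,
          Complex.normSq_ofReal, Complex.normSq_ofReal, Complex.normSq_eq_norm_sq, ← hε]
        field_simp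
        nlinarith
      rw [show star ω = (starRingEnd ℂ) ω from rfl, Complex.mul_conj, hns]
      norm_num
    set v : Fin N → ℂ := fun p => if p = i then (c:ℂ) else if p = j then (t:ℂ) * ω else 0
      with hvdef
    have hvz : ∀ p, p ≠ i → p ≠ j → v p = 0 := by
      intro p h1 h2; simp [hvdef, h1, h2]
    have hvi : v i = (c:ℂ) := by simp [hvdef]
    have hvj : v j = (t:ℂ) * ω := by simp [hvdef, hij.symm]
    have hstc : star (c:ℂ) = (c:ℂ) := by simp [Complex.star_def, Complex.conj_ofReal]
    have hstt : star ((t:ℂ) * ω) = (t:ℂ) * star ω := by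
      rw [star_mul']; simp [Complex.star_def, Complex.conj_ofReal]
    have hvunit : ∑ q, v q * star (v q) = 1 := by
      rw [sum_two hij (fun p h1 h2 => by simp [hvz p h1 h2])]
      rw [hvi, hvj, hstc, hstt]
      have : (c:ℂ) * (c:ℂ) + (t:ℂ) * ω * ((t:ℂ) * star ω) =
          (c:ℂ) * (c:ℂ) + (t:ℂ) * (t:ℂ) * (ω * star ω) := by ring
      rw [this, hωω]
      have : (c:ℂ) * (c:ℂ) + (t:ℂ) * (t:ℂ) * 1 = ((c^2 + t^2 : ℝ) : ℂ) := by
        push_cast; ring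
      rw [this, hc2]
      norm_num
    have hB := rankOne_test hα.eigenvectorUnitary φ hφsupp1 v hvunit
    rw [← hUm, ← hψdef] at hB
    have hψji : ψ j i = star (ψ i j) := by
      conv_lhs => rw [← hψ.eq]
      rw [Matrix.conjTranspose_apply]
    have hstar2 : star (ψ i j) * star ω = ((a * ε : ℝ) : ℂ) := by
      rw [← star_mul', hψω]
      simp [Complex.star_def, Complex.conj_ofReal]
    have hSsum : (∑ p, ∑ q, (ψ p q * (v q * star (v p)))) =
        ψ i i * (v i * star (v i)) + ψ i j * (v j * star (v i)) +
        (ψ j i * (v i * star (v j)) + ψ j j * (v j * star (v j))) := by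
      rw [sum_two hij (f := fun p => ∑ q, ψ p q * (v q * star (v p)))
        (fun p h1 h2 => by simp [hvz p h1 h2])]
      rw [sum_two hij (fun q h1 h2 => by simp [hvz q h1 h2]),
        sum_two hij (fun q h1 h2 => by simp [hvz q h1 h2])]
    have hSval : (∑ p, ∑ q, (ψ p q * (v q * star (v p)))) =
        ((a*c^2 + b*t^2 + 2*(t*c)*(a*ε) : ℝ) : ℂ) := by
      rw [hSsum, hvi, hvj, hstc, hstt, hdiag i, hdiag j, hψji]
      rw [← ha, ← hb]
      have hψω' := hψω
      have hstar2' := hstar2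
      push_cast at hψω' hstar2' ⊢
      linear_combination ((t:ℂ)*(c:ℂ))*hψω' + ((t:ℂ)*(c:ℂ))*hstar2' +
        ((b:ℂ)*(t:ℂ)*(t:ℂ))*hωω
    rw [hSval, Complex.ofReal_re] at hB
    set X : ℝ := a*c^2 + b*t^2 + 2*(t*c)*(a*ε) with hX
    have haX : a * X = c^2 + a*b*t^2 + 2*t*c*ε := by
      rw [hX]; linear_combination (c^2 + 2*t*c*ε) * ha2
    have habs1 : |a| = 1 := by rcases ha1 with h|h <;> rw [h] <;> norm_num
    have hkey : c^2 + a*b*t^2 + 2*t*c*ε ≤ 1 := by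
      rw [← haX]
      calc a * X ≤ |a * X| := le_abs_self _
        _ = |a| * |X| := abs_mul _ _
        _ = |X| := by rw [habs1, one_mul]
        _ ≤ 1 := hB
    have k1 : 2*t*c*ε ≤ 2*t^2 := by
      nlinarith [mul_nonneg (by linarith : (0:ℝ) ≤ 1 + a*b) (sq_nonneg t)]
    have k2 : c*ε ≤ t := by
      by_contra hcon
      push_neg at hcon
      nlinarith [mul_lt_mul_of_pos_left hcon (by linarith : (0:ℝ) < 2*t)]
    have k3 : ε ≤ 2*t := by
      have := mul_le_mul_of_nonneg_right hcge (le_of_lt hεpos)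
      linarith
    linarith
  have hψeq : ψ = Matrix.diagonal (fun i => (sg i : ℂ)) := by
    ext p q
    by_cases hpq : p = q
    · subst hpq; simp [Matrix.diagonal_apply_eq, hdiag p]
    · rw [Matrix.diagonal_apply_ne _ hpq]; exact hoff p q hpq
  have hφeq : φ = Um * ψ * star Um := by
    have h1 : Um * (star Um * φ * Um) * star Um = Um * star Um * φ * (Um * star Um) := by
      simp [Matrix.mul_assoc]
    rw [hψdef, h1, hUU', Matrix.one_mul, Matrix.mul_one]
  rw [hφeq, hψeq]
  unfold posProj negProj
  rw [← hUm]
  have h2 : Um * Matrix.diagonal (fun i => if 0 < hα.eigenvalues i then (1:ℂ) else 0) * star Um -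
      Um * Matrix.diagonal (fun i => if hα.eigenvalues i < 0 then (1:ℂ) else 0) * star Um =
      Um * (Matrix.diagonal (fun i => if 0 < hα.eigenvalues i then (1:ℂ) else 0) -
        Matrix.diagonal (fun i => if hα.eigenvalues i < 0 then (1:ℂ) else 0)) * star Um := by
    rw [Matrix.mul_sub, Matrix.sub_mul]
  rw [h2, Matrix.diagonal_sub]
  refine congrArg (fun D => Um * Matrix.diagonal D * star Um) (funext fun i => ?_)
  rcases lt_or_gt_of_ne (hinv i) with hneg | hpos
  · have hneg' : hα.eigenvalues i < 0 := hneg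
    simp [hsg, not_lt.2 (le_of_lt hneg), asymm hneg, hneg, not_lt.2 (le_of_lt hneg'),
      asymm hneg', hneg']
  · have hpos' : 0 < hα.eigenvalues i := hpos
    simp [hsg, hpos, asymm hpos, not_lt.2 (le_of_lt hpos), hpos', asymm hpos',
      not_lt.2 (le_of_lt hpos')]
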